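/- Let d ≥ 1, 0 < β < d and γ > 0. Then for every ξ ∈ ℝ^d, ∫_{ℝ^d} ‖η‖^{β−d} (1 + ‖ξ − η‖²)^{−γ} dη ≤ ∫_{ℝ^d} ‖η‖^{β−d} (1 + ‖η‖²)^{−γ} dη, where both integrals take values in [0,∞]. -/

import Mathlib

open Real MeasureTheory Set

/-- Layer cake in both factors: the Lebesgue integral of a product of two nonnegative
functions equals the double integral of the measures of joint superlevel sets. -/
lemma double_layercake {E : Type*} [MeasurableSpace E] (μ : Measure E) [SFinite μ]
    (F G : E → ℝ) (hF : Measurable F) (hG : Measurable G)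
    (hF0 : ∀ x, 0 ≤ F x) (hG0 : ∀ x, 0 ≤ G x) :
    ∫⁻ η, ENNReal.ofReal (F η * G η) ∂μ
      = ∫⁻ s in Ioi (0:ℝ), ∫⁻ t in Ioi (0:ℝ), μ {η | s < F η ∧ t < G η} := by
  have key : ∀ η, ENNReal.ofReal (F η * G η)
      = ∫⁻ s in Ioi (0:ℝ), (if s < F η then ENNReal.ofReal (G η) else 0) := by
    intro η
    have : (fun s : ℝ => (if s < F η then ENNReal.ofReal (G η) else 0))
        = (Iio (F η)).indicator (fun _ => ENNReal.ofReal (G η)) := by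
      ext s; simp [Set.indicator_apply]
    rw [this, lintegral_indicator measurableSet_Iio, setLIntegral_const,
      Measure.restrict_apply measurableSet_Iio, Iio_inter_Ioi, Real.volume_Ioo,
      ENNReal.ofReal_mul (hF0 η), sub_zero, mul_comm]
  rw [lintegral_congr key]
  have hmeas : AEMeasurable (Function.uncurry fun (η : E) (s : ℝ) =>
      (if s < F η then ENNReal.ofReal (G η) else 0)) (μ.prod (volume.restrict (Ioi 0))) := by
    apply Measurable.aemeasurable
    apply Measurable.ite
    · exact measurableSet_lt measurable_snd (hF.comp measurable_fst)
    · exact ENNReal.measurable_ofReal.comp (hG.comp measurable_fst)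
    · exact measurable_const
  rw [lintegral_lintegral_swap hmeas]
  refine lintegral_congr fun s => ?_
  have : (fun η => (if s < F η then ENNReal.ofReal (G η) else 0))
      = {η | s < F η}.indicator (fun η => ENNReal.ofReal (G η)) := by
    ext η; simp [Set.indicator_apply]
  have hAs : MeasurableSet {η | s < F η} := measurableSet_lt measurable_const hF
  rw [this, lintegral_indicator hAs,
    lintegral_eq_lintegral_meas_lt _ (Filter.Eventually.of_forall hG0) hG.aemeasurable]
  refine lintegral_congr fun t => ?_
  rw [Measure.restrict_apply (measurableSet_lt measurable_const hG)]
  congr 1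
  ext η
  simp only [Set.mem_inter_iff, Set.mem_setOf_eq]
  tauto

theorem stmt_5 (d : ℕ) (hd : 1 ≤ d) (β γ : ℝ) (hβ0 : 0 < β) (hβd : β < d)
    (hγ : 0 < γ) (ξ : EuclideanSpace ℝ (Fin d)) :
    ∫⁻ η : EuclideanSpace ℝ (Fin d),
        ENNReal.ofReal (‖η‖ ^ (β - d) * (1 + ‖ξ - η‖ ^ 2) ^ (-γ))
      ≤ ∫⁻ η : EuclideanSpace ℝ (Fin d),
        ENNReal.ofReal (‖η‖ ^ (β - d) * (1 + ‖η‖ ^ 2) ^ (-γ)) := by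
  let E := EuclideanSpace ℝ (Fin d)
  haveI : Nontrivial E := by
    refine ⟨0, EuclideanSpace.single ⟨0, hd⟩ 1, fun h => ?_⟩
    have h2 : (EuclideanSpace.single (⟨0, hd⟩ : Fin d) (1:ℝ)) ⟨0, hd⟩ = 0 := by
      rw [← h]; rfl
    rw [EuclideanSpace.single_apply] at h2
    simp at h2
  have hc : β - (d:ℝ) < 0 := by linarith
  have hγ' : -γ < 0 := by linarith
  set F : E → ℝ := fun η => ‖η‖ ^ (β - (d:ℝ)) with hFdef
  have hF : Measurable F := measurable_norm.pow measurable_const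
  have hF0 : ∀ x, 0 ≤ F x := fun x => Real.rpow_nonneg (norm_nonneg x) _
  -- the two G functions
  set G₁ : E → ℝ := fun η => (1 + ‖ξ - η‖ ^ 2) ^ (-γ) with hG1def
  set G₂ : E → ℝ := fun η => (1 + ‖η‖ ^ 2) ^ (-γ) with hG2def
  have hpos : ∀ x : E, (0:ℝ) < 1 + ‖x‖ ^ 2 := by
    intro x; positivity
  have hG₁ : Measurable G₁ :=
    (measurable_const.add ((measurable_const.sub measurable_id).norm.pow
      measurable_const)).pow measurable_const
  have hG₂ : Measurable G₂ :=
    (measurable_const.add (measurable_norm.pow measurable_const)).pow measurable_const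
  have hG₁0 : ∀ x, 0 ≤ G₁ x := fun x => Real.rpow_nonneg (hpos _).le _
  have hG₂0 : ∀ x, 0 ≤ G₂ x := fun x => Real.rpow_nonneg (hpos _).le _
  rw [show (fun η : E => ENNReal.ofReal (‖η‖ ^ (β - (d:ℝ)) * (1 + ‖ξ - η‖ ^ 2) ^ (-γ)))
      = fun η => ENNReal.ofReal (F η * G₁ η) from rfl,
    show (fun η : E => ENNReal.ofReal (‖η‖ ^ (β - (d:ℝ)) * (1 + ‖η‖ ^ 2) ^ (-γ)))
      = fun η => ENNReal.ofReal (F η * G₂ η) from rfl,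
    double_layercake volume F G₁ hF hG₁ hF0 hG₁0,
    double_layercake volume F G₂ hF hG₂ hF0 hG₂0]
  refine lintegral_mono_ae ?_
  filter_upwards [ae_restrict_mem measurableSet_Ioi] with s hs
  refine lintegral_mono_ae ?_
  filter_upwards [ae_restrict_mem measurableSet_Ioi] with t ht
  simp only [Set.mem_Ioi] at hs ht
  -- superlevel sets are balls
  set r₁ : ℝ := s ^ (β - (d:ℝ))⁻¹ with hr₁
  set r₂ : ℝ := Real.sqrt (t ^ (-γ)⁻¹ - 1) with hr₂
  have hA : ∀ η : E, s < F η ↔ η ∈ Metric.ball (0:E) r₁ \ {0} := by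
    intro η
    rcases eq_or_ne η 0 with h | h
    · subst h
      simp only [hFdef, norm_zero, Real.zero_rpow hc.ne]
      exact iff_of_false (by linarith) (fun hmem => hmem.2 rfl)
    · have hη : 0 < ‖η‖ := norm_pos_iff.mpr h
      rw [Set.mem_diff, Metric.mem_ball, dist_zero_right, Set.mem_singleton_iff]
      rw [show s < F η ↔ ‖η‖ < s ^ (β - (d:ℝ))⁻¹ from
        (Real.lt_rpow_inv_iff_of_neg hη hs hc).symm]
      tauto
  have hB : ∀ x : E, t < (1 + ‖x‖ ^ 2) ^ (-γ) ↔ ‖x‖ < r₂ := by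
    intro x
    rw [hr₂, Real.lt_sqrt (norm_nonneg x), lt_sub_iff_add_lt, add_comm (‖x‖^2) 1]
    exact (Real.lt_rpow_inv_iff_of_neg (hpos x) ht hγ').symm
  have hset1 : {η : E | s < F η ∧ t < G₁ η}
      = (Metric.ball (0:E) r₁ \ {0}) ∩ Metric.ball ξ r₂ := by
    ext η
    simp only [Set.mem_setOf_eq, Set.mem_inter_iff, hA η, hG1def, hB (ξ - η),
      Metric.mem_ball, dist_eq_norm, norm_sub_rev η ξ]
    rw [dist_comm η ξ, dist_eq_norm]
  have hset2 : {η : E | s < F η ∧ t < G₂ η}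
      = Metric.ball (0:E) (min r₁ r₂) \ {0} := by
    ext η
    simp only [Set.mem_setOf_eq, hA η, hG2def, hB η, Set.mem_diff, Metric.mem_ball,
      dist_zero_right, Set.mem_singleton_iff, lt_min_iff]
    tauto
  rw [hset1, hset2, measure_diff_null (measure_singleton 0)]
  have hmono : ∀ a b : ℝ, a ≤ b →
      volume (Metric.ball (0:E) a) ≤ volume (Metric.ball (0:E) b) :=
    fun a b hab => measure_mono (Metric.ball_subset_ball hab)
  have h1 : volume ((Metric.ball (0:E) r₁ \ {0}) ∩ Metric.ball ξ r₂)
      ≤ min (volume (Metric.ball (0:E) r₁)) (volume (Metric.ball (0:E) r₂)) := by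
    refine le_min (measure_mono fun η hη => hη.1.1) ?_
    calc volume ((Metric.ball (0:E) r₁ \ {0}) ∩ Metric.ball ξ r₂)
        ≤ volume (Metric.ball ξ r₂) := measure_mono fun η hη => hη.2
      _ = volume (Metric.ball (0:E) r₂) := Measure.addHaar_ball_center volume ξ r₂
  refine h1.trans ?_
  rcases le_total r₁ r₂ with h | h
  · rw [min_eq_left h, min_eq_left (hmono _ _ h)]
  · rw [min_eq_right h, min_eq_right (hmono _ _ h)]
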